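/- Let G be a σ-pro-p-group. Then the product maps G⁺ × G⁻ → G, (a,b) ↦ ab, and G⁻ × G⁺ → G, (a,b) ↦ ab, are both homeomorphisms. -/

import Mathlib

open TopologicalGroup in
/-- In a compact totally disconnected group, every open neighbourhood of `1`
contains an open normal subgroup. -/
lemma aux_exists_openNormal {G : Type*} [Group G] [TopologicalSpace G]
    [IsTopologicalGroup G] [CompactSpace G] [T2Space G] [TotallyDisconnectedSpace G]
    {U : Set G} (hU : IsOpen U) (h1 : (1 : G) ∈ U) :
    ∃ N : OpenNormalSubgroup G, (N : Set G) ⊆ U := by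
  obtain ⟨V, hVclopen, h1V, hVU⟩ := compact_exists_isClopen_in_isOpen hU h1
  obtain ⟨N, hN⟩ := IsTopologicalGroup.exist_openNormalSubgroup_sub_clopen_nhds_of_one hVclopen h1V
  exact ⟨N, hN.trans hVU⟩

/-- Squaring is bijective in a pro-`p` group, `p` odd. -/
lemma aux_sq_bijective {p : ℕ} (hp : p.Prime) (hodd : Odd p)
    {G : Type*} [Group G] [TopologicalSpace G] [IsTopologicalGroup G]
    [CompactSpace G] [T2Space G] [TotallyDisconnectedSpace G]
    (hGpro : ∀ U : Subgroup G, U.Normal → IsOpen (U : Set G) → ∃ n : ℕ, U.index = p ^ n) :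
    Function.Bijective (fun x : G => x * x) := by
  -- in every quotient by an open normal subgroup, the order is odd
  have hodd' : ∀ N : OpenNormalSubgroup G, Odd (N.toSubgroup.index) := by
    intro N
    obtain ⟨n, hn⟩ := hGpro N.toSubgroup N.isNormal' N.isOpen'
    rw [hn]; exact hodd.pow
  have key : ∀ (N : OpenNormalSubgroup G) (q : G ⧸ N.toSubgroup),
      (q ^ ((N.toSubgroup.index + 1) / 2)) ^ 2 = q := by
    intro N q
    obtain ⟨k, hk⟩ := hodd' N
    have h2 : (N.toSubgroup.index + 1) / 2 = k + 1 := by omega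
    have hcard : q ^ N.toSubgroup.index = 1 := pow_card_eq_one'
    rw [h2, ← pow_mul]
    calc q ^ ((k + 1) * 2) = q ^ N.toSubgroup.index * q := by
          rw [← pow_succ]; congr 1; omega
      _ = q := by rw [hcard, one_mul]
  constructor
  · -- injectivity
    intro x y hxy
    by_contra hne
    have hne1 : y⁻¹ * x ≠ 1 := by
      intro h; exact hne (by rwa [inv_mul_eq_one, eq_comm] at h)
    obtain ⟨N, hN⟩ := aux_exists_openNormal (U := ({y⁻¹ * x}ᶜ : Set G))
      (isOpen_compl_singleton) (by simpa using hne1.symm)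
    have hmemN : y⁻¹ * x ∉ N.toSubgroup := fun h => hN h rfl
    have hq : (QuotientGroup.mk x : G ⧸ N.toSubgroup) ≠ QuotientGroup.mk y := by
      intro h
      rw [QuotientGroup.eq] at h
      exact hmemN (by simpa using N.toSubgroup.inv_mem h)
    apply hq
    have hsq : ((QuotientGroup.mk x : G ⧸ N.toSubgroup)) ^ 2 =
        ((QuotientGroup.mk y : G ⧸ N.toSubgroup)) ^ 2 := by
      have : x * x = y * y := hxy
      rw [pow_two, pow_two, ← QuotientGroup.mk_mul, ← QuotientGroup.mk_mul, this]
    calc (QuotientGroup.mk x : G ⧸ N.toSubgroup)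
        = ((QuotientGroup.mk x : G ⧸ N.toSubgroup) ^ ((N.toSubgroup.index + 1) / 2)) ^ 2 := by
          rw [key]
      _ = ((QuotientGroup.mk y : G ⧸ N.toSubgroup) ^ ((N.toSubgroup.index + 1) / 2)) ^ 2 := by
          rw [← pow_mul, ← pow_mul, mul_comm, pow_mul, pow_mul, hsq]
      _ = QuotientGroup.mk y := key N _
  · -- surjectivity
    intro g
    by_contra hg
    push_neg at hg
    have hrange : IsClosed (Set.range fun x : G => x * x) :=
      (isCompact_range (by continuity)).isClosed
    have hgmem : g ∉ Set.range fun x : G => x * x := by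
      rintro ⟨x, hx⟩; exact hg x hx
    have hopen : IsOpen {h : G | g * h ∈ (Set.range fun x : G => x * x)ᶜ} :=
      (hrange.isOpen_compl).preimage (continuous_const.mul continuous_id)
    obtain ⟨N, hN⟩ := aux_exists_openNormal hopen (by simpa using hgmem)
    -- find a square root mod N
    obtain ⟨x, hx⟩ := QuotientGroup.mk_surjective
      ((QuotientGroup.mk g : G ⧸ N.toSubgroup) ^ ((N.toSubgroup.index + 1) / 2))
    have : (QuotientGroup.mk (x * x) : G ⧸ N.toSubgroup) = QuotientGroup.mk g := by
      rw [QuotientGroup.mk_mul, hx, ← pow_two, key]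
    rw [eq_comm, QuotientGroup.eq] at this
    have h2 := hN this
    simp only [Set.mem_setOf_eq, Set.mem_compl_iff, mul_inv_cancel_left] at h2
    exact h2 ⟨x, rfl⟩

/-- Let `G` be a `σ`-pro-`p`-group. Then the product maps
`G⁺ × G⁻ → G, (a,b) ↦ ab` and `G⁻ × G⁺ → G, (a,b) ↦ ab` are both
homeomorphisms. -/
theorem sigma_pro_p_group_mul_homeomorph
    {p : ℕ} (hp : p.Prime) (hodd : Odd p)
    {G : Type*} [Group G] [TopologicalSpace G] [IsTopologicalGroup G]
    [CompactSpace G] [T2Space G] [TotallyDisconnectedSpace G]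
    (hGpro : ∀ U : Subgroup G, U.Normal → IsOpen (U : Set G) → ∃ n : ℕ, U.index = p ^ n)
    (σ : G ≃* G) (hσcont : Continuous σ) (hσ : ∀ a, σ (σ a) = a) :
    (∃ e : ({a : G // σ a = a} × {a : G // σ a = a⁻¹}) ≃ₜ G,
      ∀ x, e x = (x.1 : G) * (x.2 : G)) ∧
    (∃ e : ({a : G // σ a = a⁻¹} × {a : G // σ a = a}) ≃ₜ G,
      ∀ x, e x = (x.1 : G) * (x.2 : G)) := by
  have hsq := aux_sq_bijective hp hodd hGpro
  set E : G ≃ G := Equiv.ofBijective _ hsq with hEdef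
  have hE : ∀ g : G, E.symm g * E.symm g = g := fun g => E.apply_symm_apply g
  have hinj : ∀ x y : G, x * x = y * y → x = y := fun x y h => hsq.1 h
  have hsqeq : ∀ (x g : G), x * x = g → E.symm g = x := by
    intro x g h
    rw [Equiv.symm_apply_eq]
    exact h.symm
  haveI : CompactSpace {a : G // σ a = a} :=
    isCompact_iff_compactSpace.mp ((isClosed_eq hσcont continuous_id).isCompact)
  haveI : CompactSpace {a : G // σ a = a⁻¹} :=
    isCompact_iff_compactSpace.mp ((isClosed_eq hσcont continuous_inv).isCompact)
  constructor
  · -- G⁺ × G⁻ → G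
    have hb : ∀ g : G, σ (E.symm ((σ g)⁻¹ * g)) = (E.symm ((σ g)⁻¹ * g))⁻¹ := by
      intro g
      apply hinj
      calc σ (E.symm ((σ g)⁻¹ * g)) * σ (E.symm ((σ g)⁻¹ * g))
          = σ (E.symm ((σ g)⁻¹ * g) * E.symm ((σ g)⁻¹ * g)) := (map_mul σ _ _).symm
        _ = σ ((σ g)⁻¹ * g) := by rw [hE]
        _ = g⁻¹ * σ g := by rw [map_mul, map_inv, hσ]
        _ = (E.symm ((σ g)⁻¹ * g))⁻¹ * (E.symm ((σ g)⁻¹ * g))⁻¹ := by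
            rw [← mul_inv_rev, hE, mul_inv_rev, inv_inv]
    have ha : ∀ g : G,
        σ (g * (E.symm ((σ g)⁻¹ * g))⁻¹) = g * (E.symm ((σ g)⁻¹ * g))⁻¹ := by
      intro g
      rw [map_mul, map_inv, hb g, inv_inv]
      have h := hE ((σ g)⁻¹ * g)
      -- σ g * b = g * b⁻¹  where b * b = (σ g)⁻¹ * g
      set b := E.symm ((σ g)⁻¹ * g)
      have : g = σ g * (b * b) := by rw [h, mul_inv_cancel_left]
      conv_rhs => rw [this]
      group
    let e1 : ({a : G // σ a = a} × {a : G // σ a = a⁻¹}) ≃ G :=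
      { toFun := fun x => (x.1 : G) * (x.2 : G)
        invFun := fun g =>
          (⟨g * (E.symm ((σ g)⁻¹ * g))⁻¹, ha g⟩, ⟨E.symm ((σ g)⁻¹ * g), hb g⟩)
        left_inv := by
          rintro ⟨⟨a, haa⟩, ⟨b, hbb⟩⟩
          have hEb : E.symm ((σ (a * b))⁻¹ * (a * b)) = b := by
            apply hsqeq
            rw [map_mul, haa, hbb, mul_inv_rev, inv_inv]
            group
          simp only [hEb, Prod.mk.injEq, Subtype.mk.injEq]
          exact ⟨by group, trivial⟩
        right_inv := by
          intro g
          simp only []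
          rw [inv_mul_cancel_right] }
    refine ⟨Continuous.homeoOfEquivCompactToT2 (f := e1) ?_, fun x => rfl⟩
    exact (continuous_subtype_val.comp continuous_fst).mul
      (continuous_subtype_val.comp continuous_snd)
  · -- G⁻ × G⁺ → G
    have hb : ∀ g : G, σ (E.symm (g * (σ g)⁻¹)) = (E.symm (g * (σ g)⁻¹))⁻¹ := by
      intro g
      apply hinj
      calc σ (E.symm (g * (σ g)⁻¹)) * σ (E.symm (g * (σ g)⁻¹))
          = σ (E.symm (g * (σ g)⁻¹) * E.symm (g * (σ g)⁻¹)) := (map_mul σ _ _).symm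
        _ = σ (g * (σ g)⁻¹) := by rw [hE]
        _ = σ g * g⁻¹ := by rw [map_mul, map_inv, hσ]
        _ = (E.symm (g * (σ g)⁻¹))⁻¹ * (E.symm (g * (σ g)⁻¹))⁻¹ := by
            rw [← mul_inv_rev, hE, mul_inv_rev, inv_inv]
    have ha : ∀ g : G,
        σ ((E.symm (g * (σ g)⁻¹))⁻¹ * g) = (E.symm (g * (σ g)⁻¹))⁻¹ * g := by
      intro g
      rw [map_mul, map_inv, hb g, inv_inv]
      have h := hE (g * (σ g)⁻¹)
      set b := E.symm (g * (σ g)⁻¹)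
      -- b * σ g = b⁻¹ * g  where b * b = g * (σ g)⁻¹
      have : g = (b * b) * σ g := by rw [h, inv_mul_cancel_right]
      conv_rhs => rw [this]
      group
    let e2 : ({a : G // σ a = a⁻¹} × {a : G // σ a = a}) ≃ G :=
      { toFun := fun x => (x.1 : G) * (x.2 : G)
        invFun := fun g =>
          (⟨E.symm (g * (σ g)⁻¹), hb g⟩, ⟨(E.symm (g * (σ g)⁻¹))⁻¹ * g, ha g⟩)
        left_inv := by
          rintro ⟨⟨b, hbb⟩, ⟨a, haa⟩⟩
          have hEb : E.symm ((b * a) * (σ (b * a))⁻¹) = b := by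
            apply hsqeq
            rw [map_mul, haa, hbb, mul_inv_rev, inv_inv]
            group
          simp only [hEb, Prod.mk.injEq, Subtype.mk.injEq]
          exact ⟨trivial, by group⟩
        right_inv := by
          intro g
          simp only []
          rw [mul_inv_cancel_left] }
    refine ⟨Continuous.homeoOfEquivCompactToT2 (f := e2) ?_, fun x => rfl⟩
    exact (continuous_subtype_val.comp continuous_fst).mul
      (continuous_subtype_val.comp continuous_snd)
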